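/- Let x_p(n), for 0 < p < 1, be the largest k ≤ n-2 with 2^k·(n-3)!·(2n-k-4)!/(2·(2n-5)!·(n-k-2)!) ≥ 1−p. Then x_p(n)/√(−4·ln(1−p)·n) → 1 as n → ∞. -/

import Mathlib

set_option maxHeartbeats 1000000

open Nat Filter Finset

/-- The `p`-percentile of the distance between two leaves in a fully resolved unrooted
phylogenetic tree with `n` leaves. -/
noncomputable def percentile (p : ℝ) (n : ℕ) : ℕ :=
  sSup {k : ℕ | k ≤ n - 2 ∧
    1 - p ≤ (2 ^ k * ((n - 3)! : ℝ) * ((2 * n - k - 4)! : ℝ))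
        / (2 * ((2 * n - 5)! : ℝ) * ((n - k - 2)! : ℝ))}

noncomputable def Fr (p : ℝ) (n k : ℕ) : ℝ :=
  (2 ^ k * ((n - 3)! : ℝ) * ((2 * n - k - 4)! : ℝ))
        / (2 * ((2 * n - 5)! : ℝ) * ((n - k - 2)! : ℝ))

lemma Fr_pos (p : ℝ) (n k : ℕ) : 0 < Fr p n k := by
  unfold Fr
  have := n.factorial_pos
  positivity

lemma Fr_zero (p : ℝ) (n : ℕ) (hn : 3 ≤ n) : Fr p n 0 = 1 := by
  obtain ⟨m, rfl⟩ : ∃ m, n = 3 + m := ⟨n - 3, by omega⟩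
  unfold Fr
  rw [show 3 + m - 3 = m from by omega, show 2 * (3 + m) - 0 - 4 = 2*m+2 from by omega,
    show 2 * (3 + m) - 5 = 2*m+1 from by omega, show 3 + m - 0 - 2 = m+1 from by omega]
  have f1 : ((2*m+2)! : ℝ) = (2*m+2) * ((2*m+1)! : ℝ) := by
    rw [show 2*m+2 = (2*m+1)+1 from rfl, Nat.factorial_succ]; push_cast; ring
  have f2 : ((m+1)! : ℝ) = (m+1) * (m ! : ℝ) := by
    rw [Nat.factorial_succ]; push_cast; ring
  have h1 : (0:ℝ) < ((2*m+1)! : ℝ) := by exact_mod_cast (2*m+1).factorial_pos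
  have h2 : (0:ℝ) < (m ! : ℝ) := by exact_mod_cast m.factorial_pos
  rw [f1, f2]
  field_simp

lemma Fr_succ (p : ℝ) (n k : ℕ) (hk : k + 3 ≤ n) :
    Fr p n (k+1) = Fr p n k * (2 * ((n:ℝ) - k - 2) / (2*(n:ℝ) - k - 4)) := by
  obtain ⟨m, rfl⟩ : ∃ m, n = k + 3 + m := ⟨n - (k+3), by omega⟩
  unfold Fr
  rw [show k + 3 + m - 3 = k + m from by omega,
    show 2 * (k + 3 + m) - (k+1) - 4 = k+2*m+1 from by omega,
    show 2 * (k + 3 + m) - k - 4 = k+2*m+2 from by omega,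
    show 2 * (k + 3 + m) - 5 = 2*k+2*m+1 from by omega,
    show k + 3 + m - (k+1) - 2 = m from by omega,
    show k + 3 + m - k - 2 = m+1 from by omega]
  have f1 : ((k+2*m+2)! : ℝ) = (k+2*m+2) * ((k+2*m+1)! : ℝ) := by
    rw [show k+2*m+2 = (k+2*m+1)+1 from rfl, Nat.factorial_succ]; push_cast; ring
  have f2 : ((m+1)! : ℝ) = (m+1) * (m ! : ℝ) := by
    rw [Nat.factorial_succ]; push_cast; ring
  have h1 : (0:ℝ) < ((2*k+2*m+1)! : ℝ) := by exact_mod_cast (2*k+2*m+1).factorial_pos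
  have h2 : (0:ℝ) < (m ! : ℝ) := by exact_mod_cast m.factorial_pos
  have h3 : (0:ℝ) < ((k+m)! : ℝ) := by exact_mod_cast (k+m).factorial_pos
  have h4 : (0:ℝ) < ((k+2*m+1)! : ℝ) := by exact_mod_cast (k+2*m+1).factorial_pos
  have h7 : 2 * (((k+3+m : ℕ):ℝ) - k - 2) / (2*((k+3+m : ℕ):ℝ) - k - 4)
      = (2*((m:ℝ)+1))/((k:ℝ)+2*m+2) := by
    congr 1 <;> push_cast <;> ring
  rw [h7, f1, f2, pow_succ]
  have h6 : (0:ℝ) < (k:ℝ)+2*m+2 := by positivity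
  have h8 : (0:ℝ) < (m:ℝ)+1 := by positivity
  field_simp


lemma Fr_eq_prod (p : ℝ) (n k : ℕ) (hn : 3 ≤ n) (hk : k + 2 ≤ n) :
    Fr p n k = ∏ j ∈ Finset.range k, (2 * ((n:ℝ) - j - 2) / (2*(n:ℝ) - j - 4)) := by
  induction k with
  | zero => simpa using Fr_zero p n hn
  | succ k ih =>
    rw [Finset.prod_range_succ, ← ih (by omega), Fr_succ p n k (by omega)]

lemma denom_pos (n j : ℕ) (h : j + 3 ≤ n) : (0:ℝ) < 2*(n:ℝ) - j - 4 := by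
  have : (j:ℝ) + 3 ≤ n := by exact_mod_cast h
  linarith

lemma factor_nonneg (n j : ℕ) (h : j + 3 ≤ n) :
    0 ≤ 2 * ((n:ℝ) - j - 2) / (2*(n:ℝ) - j - 4) := by
  have h1 : (j:ℝ) + 3 ≤ n := by exact_mod_cast h
  have := denom_pos n j h
  apply div_nonneg _ this.le
  linarith

lemma factor_le (n j : ℕ) (h : j + 3 ≤ n) :
    2 * ((n:ℝ) - j - 2) / (2*(n:ℝ) - j - 4) ≤ Real.exp (-((j:ℝ)/(2*(n:ℝ)))) := by
  have h1 : (j:ℝ) + 3 ≤ n := by exact_mod_cast h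
  have hd := denom_pos n j h
  have hn0 : (0:ℝ) < n := by linarith [Nat.cast_nonneg (α := ℝ) j]
  have key : 2 * ((n:ℝ) - j - 2) / (2*(n:ℝ) - j - 4) = 1 - (j:ℝ)/(2*(n:ℝ) - j - 4) := by
    field_simp; ring
  rw [key]
  have h2 : (j:ℝ)/(2*(n:ℝ)) ≤ (j:ℝ)/(2*(n:ℝ) - j - 4) := by
    apply div_le_div_of_nonneg_left (Nat.cast_nonneg j) hd
    linarith [Nat.cast_nonneg (α := ℝ) j]
  calc 1 - (j:ℝ)/(2*(n:ℝ) - j - 4) ≤ Real.exp (-((j:ℝ)/(2*(n:ℝ) - j - 4))) := by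
        linarith [Real.add_one_le_exp (-((j:ℝ)/(2*(n:ℝ) - j - 4)))]
    _ ≤ Real.exp (-((j:ℝ)/(2*(n:ℝ)))) := by
        apply Real.exp_le_exp.2; linarith

lemma factor_ge (n j : ℕ) (h : j + 3 ≤ n) :
    Real.exp (-((j:ℝ)/(2*(n:ℝ) - 2*j - 4))) ≤ 2 * ((n:ℝ) - j - 2) / (2*(n:ℝ) - j - 4) := by
  have h1 : (j:ℝ) + 3 ≤ n := by exact_mod_cast h
  have hd := denom_pos n j h
  have hj : (0:ℝ) ≤ j := Nat.cast_nonneg j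
  have hd2 : (0:ℝ) < 2*(n:ℝ) - 2*j - 4 := by linarith
  set t : ℝ := (j:ℝ)/(2*(n:ℝ) - 2*j - 4) with ht
  have ht0 : 0 ≤ t := by positivity
  have h1t : 0 < 1 + t := by linarith
  have hexp : 1 + t ≤ Real.exp t := by linarith [Real.add_one_le_exp t]
  have key : 2 * ((n:ℝ) - j - 2) / (2*(n:ℝ) - j - 4) = (1 + t)⁻¹ := by
    rw [ht, one_add_div hd2.ne', inv_div]; congr 1 <;> ring
  rw [key, Real.exp_neg]
  apply inv_anti₀ h1t hexp


lemma sum_range_cast (k : ℕ) : ∑ j ∈ Finset.range k, (j:ℝ) = k*((k:ℝ)-1)/2 := by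
  induction k with
  | zero => simp
  | succ k ih => rw [Finset.sum_range_succ, ih]; push_cast; ring

lemma sum_neg_div (k : ℕ) (D : ℝ) (hD : D ≠ 0) :
    ∑ j ∈ Finset.range k, -((j:ℝ)/D) = -((k:ℝ)*((k:ℝ)-1)/(2*D)) := by
  calc ∑ j ∈ Finset.range k, -((j:ℝ)/D) = ∑ j ∈ Finset.range k, (j:ℝ) * (-D⁻¹) :=
        Finset.sum_congr rfl (fun j _ => by ring)
    _ = (∑ j ∈ Finset.range k, (j:ℝ)) * (-D⁻¹) := by rw [← Finset.sum_mul]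
    _ = -((k:ℝ)*((k:ℝ)-1)/(2*D)) := by rw [sum_range_cast]; field_simp

lemma Fr_le_exp (p : ℝ) (n k : ℕ) (hn : 3 ≤ n) (hk : k + 2 ≤ n) :
    Fr p n k ≤ Real.exp (-((k:ℝ)*((k:ℝ)-1)/(4*(n:ℝ)))) := by
  rw [Fr_eq_prod p n k hn hk]
  have hj : ∀ j ∈ Finset.range k, j + 3 ≤ n := fun j hj => by
    have := Finset.mem_range.1 hj; omega
  calc (∏ j ∈ Finset.range k, (2 * ((n:ℝ) - j - 2) / (2*(n:ℝ) - j - 4)))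
      ≤ ∏ j ∈ Finset.range k, Real.exp (-((j:ℝ)/(2*(n:ℝ)))) := by
        apply Finset.prod_le_prod (fun j hjm => factor_nonneg n j (hj j hjm))
          (fun j hjm => factor_le n j (hj j hjm))
    _ = Real.exp (∑ j ∈ Finset.range k, -((j:ℝ)/(2*(n:ℝ)))) := (Real.exp_sum _ _).symm
    _ = Real.exp (-((k:ℝ)*((k:ℝ)-1)/(4*(n:ℝ)))) := by
        congr 1
        have hn0 : (2*(n:ℝ)) ≠ 0 := by positivity
        rw [sum_neg_div k _ hn0]; ring_nf

lemma Fr_ge_exp (p : ℝ) (n k : ℕ) (hn : 3 ≤ n) (hk : k + 2 ≤ n) :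
    Real.exp (-((k:ℝ)^2/(2*(2*(n:ℝ)-2*(k:ℝ)-2)))) ≤ Fr p n k := by
  rw [Fr_eq_prod p n k hn hk]
  have hk' : (k:ℝ) + 2 ≤ n := by exact_mod_cast hk
  have hD : (0:ℝ) < 2*(n:ℝ)-2*(k:ℝ)-2 := by linarith
  have hj : ∀ j ∈ Finset.range k, j + 3 ≤ n := fun j hj => by
    have := Finset.mem_range.1 hj; omega
  calc Real.exp (-((k:ℝ)^2/(2*(2*(n:ℝ)-2*(k:ℝ)-2))))
      ≤ Real.exp (-((k:ℝ)*((k:ℝ)-1)/2/(2*(n:ℝ)-2*(k:ℝ)-2))) := by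
        apply Real.exp_le_exp.2
        have : (k:ℝ)*((k:ℝ)-1) ≤ (k:ℝ)^2 := by nlinarith [Nat.cast_nonneg (α := ℝ) k]
        rw [div_div]
        apply neg_le_neg
        exact div_le_div₀ (by positivity) this (by positivity) le_rfl
      _ = Real.exp (∑ j ∈ Finset.range k, -((j:ℝ)/(2*(n:ℝ)-2*(k:ℝ)-2))) := by
        congr 1
        rw [sum_neg_div k _ (ne_of_gt hD)]
        rw [div_div]
      _ ≤ ∏ j ∈ Finset.range k, (2 * ((n:ℝ) - j - 2) / (2*(n:ℝ) - j - 4)) := by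
        rw [Real.exp_sum]
        apply Finset.prod_le_prod (fun j _ => (Real.exp_pos _).le)
        intro j hjm
        have h3 := hj j hjm
        have hjk : j < k := Finset.mem_range.1 hjm
        refine le_trans ?_ (factor_ge n j h3)
        apply Real.exp_le_exp.2
        have hjR : (0:ℝ) ≤ j := Nat.cast_nonneg j
        have hjkR : (j:ℝ) ≤ (k:ℝ) - 1 := by
          have : (j:ℝ) + 1 ≤ k := by exact_mod_cast hjk
          linarith
        have hd2 : (0:ℝ) < 2*(n:ℝ) - 2*j - 4 := by linarith
        apply neg_le_neg
        apply div_le_div_of_nonneg_left hjR hD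
        linarith

lemma percentile_eq (p : ℝ) (n : ℕ) :
    percentile p n = sSup {k : ℕ | k ≤ n - 2 ∧ 1 - p ≤ Fr p n k} := rfl


lemma le_percentile (p : ℝ) (n k : ℕ) (hk : k + 2 ≤ n) (h : 1 - p ≤ Fr p n k) :
    k ≤ percentile p n := by
  rw [percentile_eq]
  exact le_csSup ⟨n - 2, fun x hx => hx.1⟩ ⟨by omega, h⟩

lemma percentile_le (p : ℝ) (hp0 : 0 < p) (n K : ℕ) (hn : 3 ≤ n)
    (h : ∀ m : ℕ, m ≤ n - 2 → 1 - p ≤ Fr p n m → m ≤ K) : percentile p n ≤ K := by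
  rw [percentile_eq]
  refine csSup_le ⟨0, Nat.zero_le _, by rw [Fr_zero p n hn]; linarith⟩
    (fun m hm => h m hm.1 hm.2)

lemma eventually_lower (p : ℝ) (hp0 : 0 < p) (hp1 : p < 1) (ε : ℝ) (hε0 : 0 < ε)
    (hε1 : ε < 1) :
    ∀ᶠ n : ℕ in atTop,
      (1-ε) * Real.sqrt (4*(-Real.log (1-p))*n) - 1 ≤ (percentile p n : ℝ) := by
  set c : ℝ := -Real.log (1-p) with hc_def
  have hL0 : (0:ℝ) < 1 - p := by linarith
  have hc : 0 < c := by
    have := Real.log_neg hL0 (by linarith)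
    rw [hc_def]; linarith
  have hexp : Real.exp (-c) = 1 - p := by rw [hc_def, neg_neg, Real.exp_log hL0]
  filter_upwards [eventually_ge_atTop 3,
    (tendsto_natCast_atTop_atTop (R := ℝ)).eventually_ge_atTop (16*c/ε^2),
    (tendsto_natCast_atTop_atTop (R := ℝ)).eventually_ge_atTop (4/ε)] with n h3 h16 h4
  have hn0 : (0:ℝ) < n := by
    have : (3:ℝ) ≤ n := by exact_mod_cast h3
    linarith
  set s : ℝ := Real.sqrt (4*c*n) with hs_def
  have hs_nonneg : 0 ≤ s := Real.sqrt_nonneg _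
  have hs_sq : s^2 = 4*c*n := Real.sq_sqrt (by positivity)
  have hns : s + 2 ≤ ε * n := by
    have h16' : 16*c ≤ ε^2*n := by
      rw [div_le_iff₀ (by positivity)] at h16; linarith
    have hsq : s ≤ ε*n/2 := by
      rw [hs_def, show ε*(n:ℝ)/2 = Real.sqrt ((ε*n/2)^2) from (Real.sqrt_sq (by positivity)).symm]
      apply Real.sqrt_le_sqrt; nlinarith
    have h4' : 4 ≤ ε*n := by
      rw [div_le_iff₀ hε0] at h4; linarith [mul_comm ε (n:ℝ)]
    linarith
  set k : ℕ := ⌊(1-ε) * s⌋₊ with hk_def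
  have h1ε : (0:ℝ) ≤ 1 - ε := by linarith
  have hk_le : (k:ℝ) ≤ (1-ε)*s := Nat.floor_le (by positivity)
  have hk_gt : (1-ε)*s - 1 < k := Nat.sub_one_lt_floor _
  have hks : (1-ε)*s ≤ s := by nlinarith
  have hεn : ε * n ≤ n := by nlinarith
  have hk2 : k + 2 ≤ n := by
    have : (k:ℝ) + 2 ≤ n := by linarith
    exact_mod_cast this
  have hmem : 1 - p ≤ Fr p n k := by
    refine le_trans ?_ (Fr_ge_exp p n k h3 hk2)
    rw [← hexp]
    apply Real.exp_le_exp.2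
    apply neg_le_neg
    have hknum : (k:ℝ)^2 ≤ (1-ε)^2*(4*c*n) := by nlinarith
    have hden : 4*(n:ℝ)*(1-ε) ≤ 2*(2*(n:ℝ)-2*(k:ℝ)-2) := by nlinarith
    have hden0 : (0:ℝ) < 4*(n:ℝ)*(1-ε) := by nlinarith
    calc (k:ℝ)^2/(2*(2*(n:ℝ)-2*(k:ℝ)-2)) ≤ ((1-ε)^2*(4*c*n))/(4*(n:ℝ)*(1-ε)) :=
          div_le_div₀ (by positivity) hknum hden0 hden
      _ = (1-ε)*c := by field_simp
      _ ≤ c := by nlinarith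
  have := le_percentile p n k hk2 hmem
  have : (k:ℝ) ≤ (percentile p n : ℝ) := by exact_mod_cast this
  linarith

lemma eventually_upper (p : ℝ) (hp0 : 0 < p) (hp1 : p < 1) (ε : ℝ) (hε0 : 0 < ε) :
    ∀ᶠ n : ℕ in atTop,
      (percentile p n : ℝ) ≤ (1+ε) * Real.sqrt (4*(-Real.log (1-p))*n) + 1 := by
  set c : ℝ := -Real.log (1-p) with hc_def
  have hL0 : (0:ℝ) < 1 - p := by linarith
  have hc : 0 < c := by
    have := Real.log_neg hL0 (by linarith)
    rw [hc_def]; linarith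
  have hexp : Real.exp (-c) = 1 - p := by rw [hc_def, neg_neg, Real.exp_log hL0]
  filter_upwards [eventually_ge_atTop 3] with n h3
  have hn0 : (0:ℝ) < n := by
    have : (3:ℝ) ≤ n := by exact_mod_cast h3
    linarith
  set s : ℝ := Real.sqrt (4*c*n) with hs_def
  have hs0 : 0 < s := Real.sqrt_pos.2 (by positivity)
  have hs_sq : s^2 = 4*c*n := Real.sq_sqrt (by positivity)
  set K : ℕ := ⌊(1+ε)*s + 1⌋₊ with hK_def
  have hKle : percentile p n ≤ K := by
    apply percentile_le p hp0 n K h3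
    intro m hm hF
    by_contra hKm
    push_neg at hKm
    have hm2 : m + 2 ≤ n := by omega
    have hmR : (1+ε)*s + 1 < (m:ℝ) := by
      have h1 : ((K:ℕ):ℝ) + 1 ≤ m := by exact_mod_cast hKm
      have := Nat.lt_floor_add_one ((1+ε)*s + 1)
      rw [← hK_def] at this
      linarith
    have hlt : Real.exp (-((m:ℝ)*((m:ℝ)-1)/(4*(n:ℝ)))) < 1 - p := by
      rw [← hexp]
      apply Real.exp_lt_exp.2
      have h1 : s < (m:ℝ) - 1 := by nlinarith [mul_pos hε0 hs0]
      have h0 : (0:ℝ) < (m:ℝ) - 1 := lt_trans hs0 h1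
      have : 4*c*(n:ℝ) < (m:ℝ)*((m:ℝ)-1) := by nlinarith
      have h4n : (0:ℝ) < 4*n := by positivity
      rw [neg_lt_neg_iff, lt_div_iff₀ h4n]
      linarith
    have := Fr_le_exp p n m h3 hm2
    linarith
  have : (percentile p n : ℝ) ≤ K := by exact_mod_cast hKle
  have hKR : (K:ℝ) ≤ (1+ε)*s + 1 := Nat.floor_le (by positivity)
  linarith

theorem percentile_limit (p : ℝ) (hp0 : 0 < p) (hp1 : p < 1) :
    Tendsto (fun n : ℕ => (percentile p n : ℝ) / Real.sqrt (-4 * Real.log (1 - p) * n))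
      atTop (nhds 1) := by
  set c : ℝ := -Real.log (1-p) with hc_def
  have hL0 : (0:ℝ) < 1 - p := by linarith
  have hc : 0 < c := by
    have := Real.log_neg hL0 (by linarith)
    rw [hc_def]; linarith
  have hfun : ∀ n : ℕ, Real.sqrt (-4 * Real.log (1 - p) * n) = Real.sqrt (4*c*n) := by
    intro n; rw [hc_def]; ring_nf
  have hEs : ∀ ε : ℝ, 0 < ε → ∀ᶠ n : ℕ in atTop, 1/ε ≤ Real.sqrt (4*c*n) := by
    intro ε hε
    filter_upwards [(tendsto_natCast_atTop_atTop (R := ℝ)).eventually_ge_atTop ((1/ε)^2/(4*c))]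
      with n hn
    rw [div_le_iff₀ (by positivity)] at hn
    rw [show 1/ε = Real.sqrt ((1/ε)^2) from (Real.sqrt_sq (by positivity)).symm]
    apply Real.sqrt_le_sqrt; linarith
  apply tendsto_order.2
  constructor
  · intro a ha
    set ε : ℝ := min ((1-a)/4) (1/2) with hε_def
    have hε0 : 0 < ε := lt_min (by linarith) (by norm_num)
    have hε1 : ε < 1 := lt_of_le_of_lt (min_le_right _ _) (by norm_num)
    have ha2 : a < 1 - 2*ε := by
      have : ε ≤ (1-a)/4 := min_le_left _ _
      linarith
    filter_upwards [eventually_lower p hp0 hp1 ε hε0 hε1, hEs ε hε0] with n hA hs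
    have hs0 : (0:ℝ) < Real.sqrt (4*c*n) := lt_of_lt_of_le (by positivity) hs
    have h1ε : 1 ≤ ε * Real.sqrt (4*c*n) := by
      rw [div_le_iff₀ hε0] at hs; linarith [mul_comm ε (Real.sqrt (4*c*(n:ℝ)))]
    rw [hfun n, lt_div_iff₀ hs0]
    nlinarith [mul_pos (show (0:ℝ) < 1-2*ε-a by linarith) hs0]
  · intro a ha
    set ε : ℝ := min ((a-1)/4) (1/2) with hε_def
    have hε0 : 0 < ε := lt_min (by linarith) (by norm_num)
    have ha2 : 1 + 2*ε < a := by
      have : ε ≤ (a-1)/4 := min_le_left _ _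
      linarith
    filter_upwards [eventually_upper p hp0 hp1 ε hε0, hEs ε hε0] with n hB hs
    have hs0 : (0:ℝ) < Real.sqrt (4*c*n) := lt_of_lt_of_le (by positivity) hs
    have h1ε : 1 ≤ ε * Real.sqrt (4*c*n) := by
      rw [div_le_iff₀ hε0] at hs; linarith [mul_comm ε (Real.sqrt (4*c*(n:ℝ)))]
    rw [hfun n, div_lt_iff₀ hs0]
    nlinarith [mul_pos (show (0:ℝ) < a-1-2*ε by linarith) hs0]
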